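/- Let φ : ℝ² → Mₙ(ℝ) be infinitely differentiable and satisfy the noncommutative Burgers equation φ_y = φ_xx + 2φ_x φ. Let α, β ∈ Mₙ(ℝ) be constant matrices such that α + β·φ(x,y) is invertible for every (x,y). Then φ' := (α + βφ)·φ·(α + βφ)⁻¹ + β·φ_x·(α + βφ)⁻¹ also satisfies the noncommutative Burgers equation φ'_y = φ'_xx + 2φ'_x φ'. -/

import Mathlib

attribute [local instance] Matrix.normedAddCommGroup Matrix.normedSpace

/-- Partial derivative in the `x`-direction of a function of two real variables. -/
noncomputable def pdx {E : Type*} [NormedAddCommGroup E] [NormedSpace ℝ E]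
    (f : ℝ × ℝ → E) : ℝ × ℝ → E :=
  fun p => fderiv ℝ f p (1, 0)

/-- Partial derivative in the `y`-direction of a function of two real variables. -/
noncomputable def pdy {E : Type*} [NormedAddCommGroup E] [NormedSpace ℝ E]
    (f : ℝ × ℝ → E) : ℝ × ℝ → E :=
  fun p => fderiv ℝ f p (0, 1)

section BurgersAux

variable {n : ℕ}

/-- Matrix multiplication as a continuous bilinear map. -/
noncomputable def mulCLM (n : ℕ) :
    Matrix (Fin n) (Fin n) ℝ →L[ℝ] Matrix (Fin n) (Fin n) ℝ →L[ℝ] Matrix (Fin n) (Fin n) ℝ :=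
  LinearMap.toContinuousLinearMap
    { toFun := fun a => LinearMap.toContinuousLinearMap (LinearMap.mul ℝ _ a)
      map_add' := by intros a b; ext x; simp [add_mul]
      map_smul' := by intros c a; ext x; simp [smul_mul_assoc] }

theorem isBBM_mul : IsBoundedBilinearMap ℝ
    (fun q : Matrix (Fin n) (Fin n) ℝ × Matrix (Fin n) (Fin n) ℝ => q.1 * q.2) :=
  (mulCLM n).isBoundedBilinearMap

theorem contDiff_mul' {f g : ℝ × ℝ → Matrix (Fin n) (Fin n) ℝ} (hf : ContDiff ℝ (⊤ : ℕ∞) f)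
    (hg : ContDiff ℝ (⊤ : ℕ∞) g) : ContDiff ℝ (⊤ : ℕ∞) (fun x => f x * g x) :=
  isBBM_mul.contDiff.comp (hf.prodMk hg)

theorem cd_dAt {E F : Type*} [NormedAddCommGroup E] [NormedSpace ℝ E]
    [NormedAddCommGroup F] [NormedSpace ℝ F] {f : E → F} (hf : ContDiff ℝ (⊤ : ℕ∞) f) (p : E) :
    DifferentiableAt ℝ f p :=
  (hf.differentiable (by
    simp)) p

theorem fderiv_mul'' {f g : ℝ × ℝ → Matrix (Fin n) (Fin n) ℝ} (hf : ContDiff ℝ (⊤ : ℕ∞) f)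
    (hg : ContDiff ℝ (⊤ : ℕ∞) g) (p w : ℝ × ℝ) :
    fderiv ℝ (fun x => f x * g x) p w
      = fderiv ℝ f p w * g p + f p * fderiv ℝ g p w := by
  have H := ((isBBM_mul (n := n)).hasFDerivAt (f p, g p)).comp p
    (((cd_dAt hf p).hasFDerivAt).prodMk ((cd_dAt hg p).hasFDerivAt))
  have H2 : HasFDerivAt (fun x => f x * g x)
      ((((isBBM_mul (n := n)).deriv (f p, g p))).comp ((fderiv ℝ f p).prod (fderiv ℝ g p))) p := H
  erw [H2.fderiv]
  simp [IsBoundedBilinearMap.deriv_apply, add_comm]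
  erw [ContinuousLinearMap.comp_apply, IsBoundedBilinearMap.deriv_apply]
  rfl

theorem fderiv_add'' {E : Type*} [NormedAddCommGroup E] [NormedSpace ℝ E]
    {f g : ℝ × ℝ → E} (hf : ContDiff ℝ (⊤ : ℕ∞) f) (hg : ContDiff ℝ (⊤ : ℕ∞) g) (p w : ℝ × ℝ) :
    fderiv ℝ (fun x => f x + g x) p w = fderiv ℝ f p w + fderiv ℝ g p w := by
  rw [fderiv_fun_add (cd_dAt hf p) (cd_dAt hg p)]; rfl

theorem fderiv_neg'' {E : Type*} [NormedAddCommGroup E] [NormedSpace ℝ E]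
    {f : ℝ × ℝ → E} (p w : ℝ × ℝ) :
    fderiv ℝ (fun x => -f x) p w = -(fderiv ℝ f p w) := by
  rw [fderiv_fun_neg]; rfl

theorem fderiv_cmul {f : ℝ × ℝ → Matrix (Fin n) (Fin n) ℝ} (hf : ContDiff ℝ (⊤ : ℕ∞) f)
    (c : Matrix (Fin n) (Fin n) ℝ) (p w : ℝ × ℝ) :
    fderiv ℝ (fun x => c * f x) p w = c * fderiv ℝ f p w := by
  have := fderiv_mul'' (contDiff_const (c := c)) hf p w
  simpa using this

theorem contDiff_pd {E : Type*} [NormedAddCommGroup E] [NormedSpace ℝ E]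
    {f : ℝ × ℝ → E} (hf : ContDiff ℝ (⊤ : ℕ∞) f) (w : ℝ × ℝ) :
    ContDiff ℝ (⊤ : ℕ∞) (fun p => fderiv ℝ f p w) := by
  have h1 : ContDiff ℝ ((⊤ : ℕ∞) : WithTop ℕ∞) (fderiv ℝ f) := hf.fderiv_right (by
    rw [show ((⊤ : ℕ∞) : WithTop ℕ∞) + 1 = ((⊤ : ℕ∞) : WithTop ℕ∞) from rfl])
  exact (ContinuousLinearMap.apply ℝ E w).contDiff.comp h1

theorem pd_comm {E : Type*} [NormedAddCommGroup E] [NormedSpace ℝ E]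
    {f : ℝ × ℝ → E} (hf : ContDiff ℝ (⊤ : ℕ∞) f) (p w1 w2 : ℝ × ℝ) :
    fderiv ℝ (fun q => fderiv ℝ f q w1) p w2
      = fderiv ℝ (fun q => fderiv ℝ f q w2) p w1 := by
  have hsym : IsSymmSndFDerivAt ℝ f p :=
    (hf.contDiffAt).isSymmSndFDerivAt (by
      rw [minSmoothness_of_isRCLikeNormedField, show (2 : WithTop ℕ∞) = ((2 : ℕ∞) : WithTop ℕ∞) from rfl, WithTop.coe_le_coe]
      exact le_top)
  have h1 : ContDiff ℝ ((⊤ : ℕ∞) : WithTop ℕ∞) (fderiv ℝ f) := hf.fderiv_right (by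
    rw [show ((⊤ : ℕ∞) : WithTop ℕ∞) + 1 = ((⊤ : ℕ∞) : WithTop ℕ∞) from rfl])
  have e : ∀ w : ℝ × ℝ, fderiv ℝ (fun q => fderiv ℝ f q w) p
      = (ContinuousLinearMap.apply ℝ E w).comp (fderiv ℝ (fderiv ℝ f) p) := by
    intro w
    exact (((ContinuousLinearMap.apply ℝ E w).hasFDerivAt).comp p
      ((cd_dAt h1 p).hasFDerivAt)).fderiv
  rw [e w1, e w2]
  simpa using hsym w2 w1

theorem contDiff_entry {f : ℝ × ℝ → Matrix (Fin n) (Fin n) ℝ} (hf : ContDiff ℝ (⊤ : ℕ∞) f)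
    (i j : Fin n) : ContDiff ℝ (⊤ : ℕ∞) (fun p => f p i j) :=
  (contDiff_pi.1 ((contDiff_pi.1 hf) i)) j

theorem contDiff_of_entries {f : ℝ × ℝ → Matrix (Fin n) (Fin n) ℝ}
    (h : ∀ i j, ContDiff ℝ (⊤ : ℕ∞) (fun p => f p i j)) : ContDiff ℝ (⊤ : ℕ∞) f := by
  exact contDiff_pi.2 fun i => contDiff_pi.2 fun j => h i j

theorem contDiff_det {f : ℝ × ℝ → Matrix (Fin n) (Fin n) ℝ}
    (h : ∀ i j, ContDiff ℝ (⊤ : ℕ∞) (fun p => f p i j)) :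
    ContDiff ℝ (⊤ : ℕ∞) (fun p => (f p).det) := by
  have e : (fun p => (f p).det)
      = fun p => ∑ σ : Equiv.Perm (Fin n),
          ((Equiv.Perm.sign σ : ℤ) : ℝ) * ∏ i, f p (σ i) i := by
    funext p; rw [Matrix.det_apply']
  rw [e]
  exact ContDiff.sum fun σ _ => contDiff_const.mul (contDiff_prod fun i _ => h (σ i) i)

theorem contDiff_inv_mat {f : ℝ × ℝ → Matrix (Fin n) (Fin n) ℝ} (hf : ContDiff ℝ (⊤ : ℕ∞) f)
    (hu : ∀ p, IsUnit (f p)) : ContDiff ℝ (⊤ : ℕ∞) (fun p => (f p)⁻¹) := by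
  have hdet : ContDiff ℝ (⊤ : ℕ∞) fun p => (f p).det :=
    contDiff_det (fun i j => contDiff_entry hf i j)
  have hdet0 : ∀ p, (f p).det ≠ 0 := fun p =>
    ((Matrix.isUnit_iff_isUnit_det _).1 (hu p)).ne_zero
  have hadj : ContDiff ℝ (⊤ : ℕ∞) fun p => (f p).adjugate := by
    apply contDiff_of_entries; intro i j
    have e : (fun p => (f p).adjugate i j)
        = fun p => ((f p).updateRow j (Pi.single i 1)).det := by
      funext p; rw [Matrix.adjugate_apply]
    rw [e]; apply contDiff_det; intro a b
    rcases eq_or_ne a j with hab | hab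
    · subst hab
      simpa [Matrix.updateRow_apply] using (contDiff_const :
        ContDiff ℝ (⊤ : ℕ∞) (fun _ : ℝ × ℝ => (Pi.single i 1 : Fin n → ℝ) b))
    · simpa [Matrix.updateRow_apply, hab] using contDiff_entry hf a b
  have e : (fun p => (f p)⁻¹) = fun p => ((f p).det)⁻¹ • (f p).adjugate := by
    funext p; rw [Matrix.inv_def, Ring.inverse_eq_inv']
  rw [e]
  exact (hdet.inv hdet0).smul hadj

/-- The purely algebraic core of the Bäcklund-transformation computation. -/
theorem backlund_algebra {R : Type*} [Ring R]
    (b U Ux Uxx Uxxx G H Uy Uxy F Fx Fxx Fy Hx Hy Nx Vx Vxx Vy : R)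
    (hHG : H * G = 1)
    (hUy : Uy = Uxx + (Ux * U + Ux * U))
    (hUxy : Uxy = Uxxx + ((Uxx * U + Ux * Ux) + (Uxx * U + Ux * Ux)))
    (hF : F = G * U + b * Ux)
    (hFx : Fx = b * Ux * U + G * Ux + b * Uxx)
    (hFxx : Fxx = (b * Uxx * U + b * Ux * Ux) + (b * Ux * Ux + G * Uxx) + b * Uxxx)
    (hFy : Fy = b * Uy * U + G * Uy + b * Uxy)
    (hHx : Hx = -(H * (b * Ux) * H))
    (hHy : Hy = -(H * (b * Uy) * H))
    (hNx : Nx = -((Hx * (b * Ux) + H * (b * Uxx)) * H + H * (b * Ux) * Hx))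
    (hVx : Vx = Fx * H + F * Hx)
    (hVxx : Vxx = (Fxx * H + Fx * Hx) + (Fx * Hx + F * Nx))
    (hVy : Vy = Fy * H + F * Hy) :
    Vy = Vxx + (Vx * (F * H) + Vx * (F * H)) := by
  have hL : Vy = (Fy - F * (H * (b * Uy))) * H := by rw [hVy, hHy]; noncomm_ring
  have hHF : H * F = U + H * (b * Ux) := by
    rw [hF, mul_add, ← mul_assoc, hHG, one_mul]
  have hVxF : Vx * (F * H) = ((Fx - F * (H * (b * Ux))) * (U + H * (b * Ux))) * H := by
    have h1 : Vx * (F * H) = ((Fx - F * (H * (b * Ux))) * (H * F)) * H := by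
      rw [hVx, hHx]; noncomm_ring
    rw [h1, hHF]
  have hR : Vxx + (Vx * (F * H) + Vx * (F * H)) =
      ((Fxx - Fx * (H * (b * Ux)) - Fx * (H * (b * Ux))
        + F * (H * (b * Ux) * (H * (b * Ux)) + H * (b * Ux) * (H * (b * Ux)) - H * (b * Uxx)))
        + ((Fx - F * (H * (b * Ux))) * (U + H * (b * Ux))
          + (Fx - F * (H * (b * Ux))) * (U + H * (b * Ux)))) * H := by
    rw [hVxF, hVxx, hNx, hHx]; noncomm_ring
  rw [hL, hR]
  congr 1
  rw [hFy, hFxx, hFx, hF, hUy, hUxy]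
  noncomm_ring

end BurgersAux

/-- The elementary Bäcklund transformation
`φ' = (α + βφ) φ (α + βφ)⁻¹ + β φ_x (α + βφ)⁻¹` maps solutions of the
noncommutative Burgers equation to solutions. -/
theorem burgers_backlund (n : ℕ) (φ : ℝ × ℝ → Matrix (Fin n) (Fin n) ℝ)
    (hφ : ContDiff ℝ (⊤ : ℕ∞) φ)
    (hburgers : ∀ p, pdy φ p = pdx (pdx φ) p + 2 • (pdx φ p * φ p))
    (α β : Matrix (Fin n) (Fin n) ℝ)
    (hinv : ∀ p, IsUnit (α + β * φ p))
    (φ' : ℝ × ℝ → Matrix (Fin n) (Fin n) ℝ)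
    (hφ' : ∀ p, φ' p = (α + β * φ p) * φ p * (α + β * φ p)⁻¹
        + β * pdx φ p * (α + β * φ p)⁻¹) :
    ∀ p, pdy φ' p = pdx (pdx φ') p + 2 • (pdx φ' p * φ' p) := by
  classical
  obtain ⟨gg, hgg⟩ : ∃ gg : ℝ × ℝ → Matrix (Fin n) (Fin n) ℝ,
      gg = fun q => α + β * φ q := ⟨_, rfl⟩
  obtain ⟨hh, hhh⟩ : ∃ hh : ℝ × ℝ → Matrix (Fin n) (Fin n) ℝ,
      hh = fun q => (gg q)⁻¹ := ⟨_, rfl⟩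
  obtain ⟨FF, hFF⟩ : ∃ FF : ℝ × ℝ → Matrix (Fin n) (Fin n) ℝ,
      FF = fun q => gg q * φ q + β * pdx φ q := ⟨_, rfl⟩
  obtain ⟨FX, hFX⟩ : ∃ FX : ℝ × ℝ → Matrix (Fin n) (Fin n) ℝ,
      FX = fun q => β * pdx φ q * φ q + gg q * pdx φ q + β * pdx (pdx φ) q := ⟨_, rfl⟩
  obtain ⟨NN, hNN⟩ : ∃ NN : ℝ × ℝ → Matrix (Fin n) (Fin n) ℝ,
      NN = fun q => -(hh q * (β * pdx φ q) * hh q) := ⟨_, rfl⟩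
  have epdx : ∀ (f : ℝ × ℝ → Matrix (Fin n) (Fin n) ℝ) (q : ℝ × ℝ),
      fderiv ℝ f q ((1 : ℝ), (0 : ℝ)) = pdx f q := fun _ _ => rfl
  have epdy : ∀ (f : ℝ × ℝ → Matrix (Fin n) (Fin n) ℝ) (q : ℝ × ℝ),
      fderiv ℝ f q ((0 : ℝ), (1 : ℝ)) = pdy f q := fun _ _ => rfl
  have hinvg : ∀ p, IsUnit (gg p) := by intro p; rw [hgg]; exact hinv p
  have hdet : ∀ p, IsUnit (gg p).det := fun p => (Matrix.isUnit_iff_isUnit_det _).1 (hinvg p)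
  have hGH1 : ∀ p, gg p * hh p = 1 := by
    intro p; rw [hhh]; exact Matrix.mul_nonsing_inv _ (hdet p)
  have hHG1 : ∀ p, hh p * gg p = 1 := by
    intro p; rw [hhh]; exact Matrix.nonsing_inv_mul _ (hdet p)
  have hgs : ContDiff ℝ (⊤ : ℕ∞) gg := by
    rw [hgg]; exact contDiff_const.add (contDiff_mul' contDiff_const hφ)
  have hhs : ContDiff ℝ (⊤ : ℕ∞) hh := by
    rw [hhh]; exact contDiff_inv_mat hgs hinvg
  have hux : ContDiff ℝ (⊤ : ℕ∞) (pdx φ) := contDiff_pd hφ (1, 0)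
  have huxx : ContDiff ℝ (⊤ : ℕ∞) (pdx (pdx φ)) := contDiff_pd hux (1, 0)
  have hFFs : ContDiff ℝ (⊤ : ℕ∞) FF := by
    rw [hFF]; exact (contDiff_mul' hgs hφ).add (contDiff_mul' contDiff_const hux)
  have hFXs : ContDiff ℝ (⊤ : ℕ∞) FX := by
    rw [hFX]
    exact ((contDiff_mul' (contDiff_mul' contDiff_const hux) hφ).add
      (contDiff_mul' hgs hux)).add (contDiff_mul' contDiff_const huxx)
  have hNNs : ContDiff ℝ (⊤ : ℕ∞) NN := by
    rw [hNN]
    exact (contDiff_mul' (contDiff_mul' hhs (contDiff_mul' contDiff_const hux)) hhs).neg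
  have Dg : ∀ p w, fderiv ℝ gg p w = β * fderiv ℝ φ p w := by
    intro p w; rw [hgg]
    have h1 : fderiv ℝ (fun q => α + β * φ q) p = fderiv ℝ (fun q => β * φ q) p :=
      fderiv_const_add α
    rw [h1]
    exact fderiv_cmul hφ β p w
  have Dh : ∀ p w, fderiv ℝ hh p w = -(hh p * (β * fderiv ℝ φ p w) * hh p) := by
    intro p w
    have h0 : (fun q => gg q * hh q) = fun _ : ℝ × ℝ => (1 : Matrix (Fin n) (Fin n) ℝ) :=
      funext hGH1
    have h1 : fderiv ℝ (fun q => gg q * hh q) p w = 0 := by rw [h0]; simp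
    rw [fderiv_mul'' hgs hhs p w] at h1
    have h2 : gg p * fderiv ℝ hh p w = -(fderiv ℝ gg p w * hh p) := by
      rw [eq_neg_iff_add_eq_zero, add_comm]; exact h1
    calc fderiv ℝ hh p w = (hh p * gg p) * fderiv ℝ hh p w := by rw [hHG1 p, one_mul]
    _ = hh p * (gg p * fderiv ℝ hh p w) := by rw [mul_assoc]
    _ = hh p * -(fderiv ℝ gg p w * hh p) := by rw [h2]
    _ = -(hh p * (β * fderiv ℝ φ p w) * hh p) := by rw [Dg p w]; noncomm_ring
  have hvf : φ' = fun q => FF q * hh q := by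
    funext q
    rw [hφ' q]
    simp only [hFF, hhh, hgg]
    noncomm_ring
  have DFF : ∀ p w, fderiv ℝ FF p w
      = β * fderiv ℝ φ p w * φ p + gg p * fderiv ℝ φ p w + β * fderiv ℝ (pdx φ) p w := by
    intro p w
    erw [hFF, fderiv_add'' (contDiff_mul' hgs hφ) (contDiff_mul' contDiff_const hux) p w,
      fderiv_mul'' hgs hφ p w, fderiv_cmul hux β p w, Dg p w]
  have DFX : ∀ p w, fderiv ℝ FX p w
      = (β * fderiv ℝ (pdx φ) p w * φ p + β * pdx φ p * fderiv ℝ φ p w)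
        + (β * fderiv ℝ φ p w * pdx φ p + gg p * fderiv ℝ (pdx φ) p w)
        + β * fderiv ℝ (pdx (pdx φ)) p w := by
    intro p w
    erw [hFX,
      fderiv_add'' ((contDiff_mul' (contDiff_mul' contDiff_const hux) hφ).add
        (contDiff_mul' hgs hux)) (contDiff_mul' contDiff_const huxx) p w,
      fderiv_add'' (contDiff_mul' (contDiff_mul' contDiff_const hux) hφ)
        (contDiff_mul' hgs hux) p w,
      fderiv_mul'' (contDiff_mul' contDiff_const hux) hφ p w,
      fderiv_mul'' hgs hux p w, fderiv_cmul hux β p w, fderiv_cmul huxx β p w, Dg p w]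
  have DNN : ∀ p w, fderiv ℝ NN p w
      = -((fderiv ℝ hh p w * (β * pdx φ p) + hh p * (β * fderiv ℝ (pdx φ) p w)) * hh p
          + hh p * (β * pdx φ p) * fderiv ℝ hh p w) := by
    intro p w
    erw [hNN,
      fderiv_neg'' (f := fun q => hh q * (β * pdx φ q) * hh q) p w,
      fderiv_mul'' (contDiff_mul' hhs (contDiff_mul' contDiff_const hux)) hhs p w,
      fderiv_mul'' hhs (contDiff_mul' contDiff_const hux) p w, fderiv_cmul hux β p w]
  -- pointwise facts in pdx/pdy language
  intro p
  have PDh1 : pdx hh p = -(hh p * (β * pdx φ p) * hh p) := by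
    rw [← epdx hh p, Dh p (1, 0), epdx φ p]
  have PDh2 : pdy hh p = -(hh p * (β * pdy φ p) * hh p) := by
    rw [← epdy hh p, Dh p (0, 1), epdy φ p]
  have PDFF1 : pdx FF p = β * pdx φ p * φ p + gg p * pdx φ p + β * pdx (pdx φ) p := by
    rw [← epdx FF p, DFF p (1, 0), epdx φ p, epdx (pdx φ) p]
  have PDFF2 : pdy FF p = β * pdy φ p * φ p + gg p * pdy φ p + β * pdy (pdx φ) p := by
    rw [← epdy FF p, DFF p (0, 1), epdy φ p, epdy (pdx φ) p]
  have PDFX1 : pdx FX p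
      = (β * pdx (pdx φ) p * φ p + β * pdx φ p * pdx φ p)
        + (β * pdx φ p * pdx φ p + gg p * pdx (pdx φ) p)
        + β * pdx (pdx (pdx φ)) p := by
    rw [← epdx FX p, DFX p (1, 0), epdx φ p, epdx (pdx φ) p, epdx (pdx (pdx φ)) p]
  have PDNN1 : pdx NN p
      = -((pdx hh p * (β * pdx φ p) + hh p * (β * pdx (pdx φ) p)) * hh p
          + hh p * (β * pdx φ p) * pdx hh p) := by
    rw [← epdx NN p, DNN p (1, 0), epdx hh p, epdx (pdx φ) p]
  have hFXp : FX p = β * pdx φ p * φ p + gg p * pdx φ p + β * pdx (pdx φ) p := by rw [hFX]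
  have hFxEq : pdx FF p = FX p := by rw [PDFF1, hFXp]
  have hNNp : NN p = -(hh p * (β * pdx φ p) * hh p) := by rw [hNN]
  have hNNeq : NN p = pdx hh p := hNNp.trans PDh1.symm
  -- Burgers hypotheses
  have hUy : pdy φ p = pdx (pdx φ) p + (pdx φ p * φ p + pdx φ p * φ p) := by
    rw [hburgers p, two_smul ℕ]
  have hby : pdy φ = fun q => pdx (pdx φ) q + (pdx φ q * φ q + pdx φ q * φ q) := by
    funext q; rw [hburgers q, two_smul ℕ]
  have hUxy : pdy (pdx φ) p = pdx (pdx (pdx φ)) p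
      + ((pdx (pdx φ) p * φ p + pdx φ p * pdx φ p)
        + (pdx (pdx φ) p * φ p + pdx φ p * pdx φ p)) := by
    have hc : pdy (pdx φ) p = pdx (pdy φ) p := pd_comm hφ p (1, 0) (0, 1)
    rw [hc, hby]
    show fderiv ℝ (fun q => pdx (pdx φ) q + (pdx φ q * φ q + pdx φ q * φ q)) p (1, 0) = _
    erw [fderiv_add'' huxx ((contDiff_mul' hux hφ).add (contDiff_mul' hux hφ)) p (1, 0),
      fderiv_add'' (contDiff_mul' hux hφ) (contDiff_mul' hux hφ) p (1, 0),
      fderiv_mul'' hux hφ p (1, 0), epdx φ p, epdx (pdx φ) p, epdx (pdx (pdx φ)) p]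
  -- values of the derivatives of φ'
  have hvp : φ' p = FF p * hh p := by rw [hvf]
  have A1 : pdy φ' p = pdy FF p * hh p + FF p * pdy hh p := by
    rw [hvf, ← epdy (fun q => FF q * hh q) p, fderiv_mul'' hFFs hhs p (0, 1),
      epdy FF p, epdy hh p]
  have A2 : pdx φ' p = FX p * hh p + FF p * pdx hh p := by
    rw [hvf, ← epdx (fun q => FF q * hh q) p, fderiv_mul'' hFFs hhs p (1, 0),
      epdx FF p, epdx hh p, hFxEq]
  have hvxf : pdx φ' = fun q => FX q * hh q + FF q * NN q := by
    funext q
    have h1 := (hvf ▸ fderiv_mul'' hFFs hhs q (1, 0) :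
      fderiv ℝ φ' q (1, 0) = fderiv ℝ FF q (1, 0) * hh q + FF q * fderiv ℝ hh q (1, 0))
    rw [DFF q (1, 0), Dh q (1, 0)] at h1
    show fderiv ℝ φ' q (1, 0) = FX q * hh q + FF q * NN q
    rw [h1, hFX, hNN]
    rfl
  have A3 : pdx (pdx φ') p = (pdx FX p * hh p + FX p * pdx hh p)
      + (FX p * pdx hh p + FF p * pdx NN p) := by
    erw [hvxf, ← epdx (fun q => FX q * hh q + FF q * NN q) p,
      fderiv_add'' (contDiff_mul' hFXs hhs) (contDiff_mul' hFFs hNNs) p (1, 0),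
      fderiv_mul'' hFXs hhs p (1, 0), fderiv_mul'' hFFs hNNs p (1, 0),
      epdx FX p, epdx hh p, epdx FF p, epdx NN p, hFxEq, hNNeq]
  -- conclude via the algebraic lemma
  rw [two_smul ℕ, hvp]
  exact backlund_algebra β (φ p) (pdx φ p) (pdx (pdx φ) p) (pdx (pdx (pdx φ)) p)
    (gg p) (hh p) (pdy φ p) (pdy (pdx φ) p) (FF p) (FX p) (pdx FX p) (pdy FF p)
    (pdx hh p) (pdy hh p) (pdx NN p) (pdx φ' p) (pdx (pdx φ') p) (pdy φ' p)
    (hHG1 p) hUy hUxy (by rw [hFF]) hFXp PDFX1 PDFF2 PDh1 PDh2 PDNN1 A2 A3 A1
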